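/- Let R be an algebraic curvature tensor on ℝⁿ (n ≥ 5) with nonnegative isotropic curvature, attaining the value 0 at an orthonormal four-frame {e₁,e₂,e₃,e₄}. Then for each q ∈ {5,…,n}, the first-variation identity R₁₃₃q + R₁₄₄q + R₄₃₂q = 0 holds (obtained by rotating e₁ towards e_q). -/
import Mathlib


noncomputable section
open scoped BigOperators

def dotp {n : ℕ} (X Y : Fin n → ℝ) : ℝ := ∑ i, X i * Y i

def ON4 {n : ℕ} (e₁ e₂ e₃ e₄ : Fin n → ℝ) : Prop :=
  dotp e₁ e₁ = 1 ∧ dotp e₂ e₂ = 1 ∧ dotp e₃ e₃ = 1 ∧ dotp e₄ e₄ = 1 ∧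
  dotp e₁ e₂ = 0 ∧ dotp e₁ e₃ = 0 ∧ dotp e₁ e₄ = 0 ∧
  dotp e₂ e₃ = 0 ∧ dotp e₂ e₄ = 0 ∧ dotp e₃ e₄ = 0

def isoCurv {n : ℕ} (R : MultilinearMap ℝ (fun _ : Fin 4 => (Fin n → ℝ)) ℝ)
    (e₁ e₂ e₃ e₄ : Fin n → ℝ) : ℝ :=
  R ![e₁, e₃, e₁, e₃] + R ![e₁, e₄, e₁, e₄] + R ![e₂, e₃, e₂, e₃]
    + R ![e₂, e₄, e₂, e₄] - 2 * R ![e₁, e₂, e₃, e₄]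


lemma dotp_comm {n : ℕ} (X Y : Fin n → ℝ) : dotp X Y = dotp Y X := by
  simp [dotp, mul_comm]

lemma dotp_lin {n : ℕ} (a b : ℝ) (x y z : Fin n → ℝ) :
    dotp (a • x + b • y) z = a * dotp x z + b * dotp y z := by
  simp [dotp, add_mul, mul_assoc, Finset.sum_add_distrib, Finset.mul_sum]

variable {n : ℕ} (R : MultilinearMap ℝ (fun _ : Fin 4 => (Fin n → ℝ)) ℝ)

lemma upd1 (x b c d z : Fin n → ℝ) : ![z,b,c,d] = Function.update ![x,b,c,d] 0 z := by
  funext i; fin_cases i <;> simp [Function.update]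

lemma upd3 (b c x d z : Fin n → ℝ) : ![b,c,z,d] = Function.update ![b,c,x,d] 2 z := by
  funext i; fin_cases i <;> simp [Function.update]

lemma R1_add (x y b c d : Fin n → ℝ) :
    R ![x + y, b, c, d] = R ![x,b,c,d] + R ![y,b,c,d] := by
  have h := R.map_update_add ![x,b,c,d] 0 x y
  rwa [← upd1 x b c d (x+y), ← upd1 x b c d x, ← upd1 x b c d y] at h

lemma R1_smul (r : ℝ) (x b c d : Fin n → ℝ) :
    R ![r • x, b, c, d] = r * R ![x,b,c,d] := by
  have h := R.map_update_smul ![x,b,c,d] 0 r x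
  rwa [← upd1 x b c d (r • x), ← upd1 x b c d x, smul_eq_mul] at h

lemma R3_add (b c x y d : Fin n → ℝ) :
    R ![b, c, x + y, d] = R ![b,c,x,d] + R ![b,c,y,d] := by
  have h := R.map_update_add ![b,c,x,d] 2 x y
  rwa [← upd3 b c x d (x+y), ← upd3 b c x d x, ← upd3 b c x d y] at h

lemma R3_smul (r : ℝ) (b c x d : Fin n → ℝ) :
    R ![b, c, r • x, d] = r * R ![b,c,x,d] := by
  have h := R.map_update_smul ![b,c,x,d] 2 r x
  rwa [← upd3 b c x d (r • x), ← upd3 b c x d x, smul_eq_mul] at h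

theorem first_variation_rotation_1q {n : ℕ} (hn : 5 ≤ n)
    (R : MultilinearMap ℝ (fun _ : Fin 4 => (Fin n → ℝ)) ℝ)
    (hanti : ∀ X Y Z W, R ![X, Y, Z, W] = - R ![Y, X, Z, W])
    (hpair : ∀ X Y Z W, R ![X, Y, Z, W] = R ![Z, W, X, Y])
    (hbianchi : ∀ X Y Z W,
      R ![X, Y, Z, W] + R ![Y, Z, X, W] + R ![Z, X, Y, W] = 0)
    (hnic : ∀ e₁ e₂ e₃ e₄ : Fin n → ℝ, ON4 e₁ e₂ e₃ e₄ →
      0 ≤ isoCurv R e₁ e₂ e₃ e₄)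
    (e₁ e₂ e₃ e₄ : Fin n → ℝ) (he : ON4 e₁ e₂ e₃ e₄)
    (hzero : isoCurv R e₁ e₂ e₃ e₄ = 0) :
    ∀ v : Fin n → ℝ, dotp v v = 1 → dotp e₁ v = 0 → dotp e₂ v = 0 →
      dotp e₃ v = 0 → dotp e₄ v = 0 →
      R ![e₁, e₃, e₃, v] + R ![e₁, e₄, e₄, v] + R ![e₄, e₃, e₂, v] = 0 := by
  intro v hvv h1v h2v h3v h4v
  obtain ⟨h11, h22, h33, h44, h12, h13, h14, h23, h24, h34⟩ := he
  -- second-pair antisymmetry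
  have hanti2 : ∀ X Y Z W, R ![X, Y, Z, W] = - R ![X, Y, W, Z] := by
    intro X Y Z W
    rw [hpair X Y Z W, hanti Z W X Y, hpair W Z X Y]
  -- the rotated first vector
  set E : ℝ → (Fin n → ℝ) := fun θ => Real.cos θ • e₁ + Real.sin θ • v with hE
  have dR : ∀ (θ : ℝ) (x : Fin n → ℝ),
      dotp (E θ) x = Real.cos θ * dotp e₁ x + Real.sin θ * dotp v x := by
    intro θ x; exact dotp_lin _ _ _ _ _
  have hON : ∀ θ, ON4 (E θ) e₂ e₃ e₄ := by
    intro θ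
    refine ⟨?_, h22, h33, h44, ?_, ?_, ?_, h23, h24, h34⟩
    · rw [dR, dotp_comm e₁ (E θ), dR, dotp_comm v (E θ), dR, h11, hvv, h1v,
        dotp_comm v e₁, h1v]
      linear_combination Real.sin_sq_add_cos_sq θ
    · rw [dR, h12, dotp_comm v e₂, h2v]; ring
    · rw [dR, h13, dotp_comm v e₃, h3v]; ring
    · rw [dR, h14, dotp_comm v e₄, h4v]; ring
  -- coefficients
  set A : ℝ := R ![e₁, e₃, e₁, e₃] + R ![e₁, e₄, e₁, e₄] with hA
  set B : ℝ := 2 * (R ![e₁, e₃, v, e₃] + R ![e₁, e₄, v, e₄]) with hB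
  set C : ℝ := R ![v, e₃, v, e₃] + R ![v, e₄, v, e₄] with hC
  set F2 : ℝ := R ![e₂, e₃, e₂, e₃] + R ![e₂, e₄, e₂, e₄] with hF2
  set D : ℝ := R ![e₁, e₂, e₃, e₄] with hD
  set Ee : ℝ := R ![v, e₂, e₃, e₄] with hEe
  set h : ℝ → ℝ := fun θ => A * Real.cos θ ^ 2 + B * (Real.cos θ * Real.sin θ)
      + C * Real.sin θ ^ 2 + F2 - 2 * D * Real.cos θ - 2 * Ee * Real.sin θ with hh
  have hiden : ∀ θ, isoCurv R (E θ) e₂ e₃ e₄ = h θ := by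
    intro θ
    have e1 : R ![v, e₃, e₁, e₃] = R ![e₁, e₃, v, e₃] := by
      rw [hpair v e₃ e₁ e₃]
    have e2 : R ![v, e₄, e₁, e₄] = R ![e₁, e₄, v, e₄] := by
      rw [hpair v e₄ e₁ e₄]
    simp only [isoCurv, hE, hh, R1_add R, R1_smul R, R3_add R, R3_smul R, e1, e2,
      hA, hB, hC, hF2, hD, hEe]
    ring
  have hpos : ∀ θ, 0 ≤ h θ := fun θ => (hiden θ) ▸ hnic _ _ _ _ (hON θ)
  have hzero' : h 0 = 0 := by
    have := hiden 0
    simp only [hE, Real.cos_zero, Real.sin_zero, one_smul, zero_smul, add_zero] at this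
    rw [← this, hzero]
  have hmin : IsLocalMin h 0 := by
    apply Filter.Eventually.of_forall
    intro θ; rw [hzero']; exact hpos θ
  have hderiv : HasDerivAt h
      (A * (2 * Real.cos 0 ^ 1 * -Real.sin 0)
        + B * (-Real.sin 0 * Real.sin 0 + Real.cos 0 * Real.cos 0)
        + C * (2 * Real.sin 0 ^ 1 * Real.cos 0)
        - 2 * D * -Real.sin 0 - 2 * Ee * Real.cos 0) 0 := by
    exact (((((((Real.hasDerivAt_cos 0).pow 2).const_mul A).add
      (((Real.hasDerivAt_cos 0).mul (Real.hasDerivAt_sin 0)).const_mul B)).add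
      (((Real.hasDerivAt_sin 0).pow 2).const_mul C)).add_const F2).sub
      ((Real.hasDerivAt_cos 0).const_mul (2 * D))).sub
      ((Real.hasDerivAt_sin 0).const_mul (2 * Ee))
  have hd0 := hmin.hasDerivAt_eq_zero hderiv
  simp only [Real.cos_zero, Real.sin_zero] at hd0
  -- translate the conclusion
  have t1 : R ![e₁, e₃, v, e₃] = - R ![e₁, e₃, e₃, v] := hanti2 _ _ _ _
  have t2 : R ![e₁, e₄, v, e₄] = - R ![e₁, e₄, e₄, v] := hanti2 _ _ _ _
  have t3 : R ![v, e₂, e₃, e₄] = R ![e₄, e₃, e₂, v] := by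
    rw [hpair v e₂ e₃ e₄, hanti e₃ e₄ v e₂, hanti2 e₄ e₃ v e₂]; ring
  rw [hB, t1, t2] at hd0
  rw [hEe, t3] at hd0
  linarith
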